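/- Let a ≥ b ≥ c and x ≥ y ≥ z be real numbers with a+b+c = x+y+z = 0 and a^2+b^2+c^2 = x^2+y^2+z^2. Then e^a + e^b + e^c ≤ e^x + e^y + e^z holds if and only if a ≤ x. -/

import Mathlib

noncomputable def Fn (S : ℝ) : ℝ → ℝ := fun a =>
  Real.exp a + Real.exp ((-a + Real.sqrt (2*S - 3*a^2))/2)
    + Real.exp ((-a - Real.sqrt (2*S - 3*a^2))/2)

lemma key_ineq (u v : ℝ) (hv : 0 < v) (huv : v < u) :
    (Real.exp v + Real.exp (-v))/2 + u/v * ((Real.exp v - Real.exp (-v))/2)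
      < Real.exp u := by
  have h1 : Real.exp (-(2*v)) > 1 - 2*v := by
    nlinarith [Real.add_one_lt_exp (x := -(2*v)) (by linarith)]
  have h2 : Real.exp v - Real.exp (-v) < 2*v*Real.exp v := by
    have hev : 0 < Real.exp v := Real.exp_pos v
    have : Real.exp (-v) = Real.exp (-(2*v)) * Real.exp v := by
      rw [← Real.exp_add]; congr 1; ring
    nlinarith [this]
  have h3 : Real.exp v * (u - v) + Real.exp v ≤ Real.exp u := by
    have := Real.add_one_le_exp (u - v)
    have hev : 0 < Real.exp v := Real.exp_pos v
    calc Real.exp v * (u - v) + Real.exp v = Real.exp v * ((u-v) + 1) := by ring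
    _ ≤ Real.exp v * Real.exp (u - v) := by nlinarith
    _ = Real.exp u := by rw [← Real.exp_add]; congr 1; ring
  -- LHS = exp v + ((u-v)/v) * sinh v < exp v + (u - v) * exp v ≤ exp u
  have h4 : (Real.exp v + Real.exp (-v))/2 + u/v * ((Real.exp v - Real.exp (-v))/2)
      = Real.exp v + (u - v)/v * ((Real.exp v - Real.exp (-v))/2) := by
    field_simp; ring
  rw [h4]
  have h5 : (u - v)/v * ((Real.exp v - Real.exp (-v))/2) < (u - v) * Real.exp v := by
    rw [div_mul_eq_mul_div, div_lt_iff₀ hv]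
    have huv' : 0 < u - v := by linarith
    nlinarith
  linarith

lemma Fn_hasDeriv (S a : ℝ) (hpos : 0 < 2*S - 3*a^2) :
    HasDerivAt (Fn S)
      (Real.exp a
        + Real.exp ((-a + Real.sqrt (2*S - 3*a^2))/2) * ((-1 + -(6*a) / (2*Real.sqrt (2*S - 3*a^2)))/2)
        + Real.exp ((-a - Real.sqrt (2*S - 3*a^2))/2) * ((-1 - -(6*a) / (2*Real.sqrt (2*S - 3*a^2)))/2)) a := by
  have hd0 : 2*S - 3*a^2 ≠ 0 := ne_of_gt hpos
  have h1 : HasDerivAt (fun t : ℝ => 2*S - 3*t^2) (-(6*a)) a := by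
    have := ((hasDerivAt_pow 2 a).const_mul (3:ℝ)).const_sub (2*S)
    refine this.congr_deriv ?_
    simp; ring
  have h2 : HasDerivAt (fun t : ℝ => Real.sqrt (2*S - 3*t^2))
      (-(6*a) / (2*Real.sqrt (2*S - 3*a^2))) a := h1.sqrt hd0
  have h3 : HasDerivAt (fun t : ℝ => (-t + Real.sqrt (2*S - 3*t^2))/2)
      ((-1 + -(6*a) / (2*Real.sqrt (2*S - 3*a^2)))/2) a :=
    (((hasDerivAt_id a).neg).add h2).div_const 2
  have h4 : HasDerivAt (fun t : ℝ => (-t - Real.sqrt (2*S - 3*t^2))/2)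
      ((-1 - -(6*a) / (2*Real.sqrt (2*S - 3*a^2)))/2) a :=
    (((hasDerivAt_id a).neg).sub h2).div_const 2
  exact ((Real.hasDerivAt_exp a).add ((Real.hasDerivAt_exp _).comp a h3)).add
    ((Real.hasDerivAt_exp _).comp a h4)

lemma Fn_mono (S : ℝ) :
    StrictMonoOn (Fn S) (Set.Icc (Real.sqrt (S/6)) (Real.sqrt (2*S/3))) := by
  apply strictMonoOn_of_deriv_pos (convex_Icc _ _)
  · apply ContinuousOn.add
    apply ContinuousOn.add
    · exact (Real.continuous_exp.comp continuous_id).continuousOn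
    · apply Real.continuous_exp.comp_continuousOn
      apply ContinuousOn.div_const
      exact (continuous_neg.continuousOn.add
        ((Real.continuous_sqrt.comp (by continuity)).continuousOn))
    · apply Real.continuous_exp.comp_continuousOn
      apply ContinuousOn.div_const
      exact (continuous_neg.continuousOn.sub
        ((Real.continuous_sqrt.comp (by continuity)).continuousOn))
  · intro a ha
    rw [interior_Icc] at ha
    obtain ⟨hl, hr⟩ := ha
    have ha0 : 0 < a := lt_of_le_of_lt (Real.sqrt_nonneg _) hl
    have hS : 0 < S := by
      by_contra h
      push_neg at h
      have h0 : Real.sqrt (2*S/3) = 0 := Real.sqrt_eq_zero'.mpr (by linarith)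
      rw [h0] at hr
      linarith
    have ha2 : a^2 < 2*S/3 := (Real.lt_sqrt ha0.le).mp hr
    have hpos : 0 < 2*S - 3*a^2 := by linarith
    set d := Real.sqrt (2*S - 3*a^2) with hd
    have hdpos : 0 < d := Real.sqrt_pos.mpr hpos
    have hd2 : d^2 = 2*S - 3*a^2 := Real.sq_sqrt hpos.le
    have hl2 : S/6 < a^2 := by
      have h := pow_lt_pow_left₀ hl (Real.sqrt_nonneg _) two_ne_zero
      rwa [Real.sq_sqrt (by positivity : (0:ℝ) ≤ S/6)] at h
    have huv : d/2 < 3*a/2 := by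
      have : d < 3*a := by nlinarith
      linarith
    have hkey := key_ineq (3*a/2) (d/2) (by linarith) huv
    rw [(Fn_hasDeriv S a hpos).deriv]
    have hE1 : Real.exp ((-a + d)/2) = Real.exp (-(a/2)) * Real.exp (d/2) := by
      rw [← Real.exp_add]; congr 1; ring
    have hE2 : Real.exp ((-a - d)/2) = Real.exp (-(a/2)) * Real.exp (-(d/2)) := by
      rw [← Real.exp_add]; congr 1; ring
    have hEa : Real.exp a = Real.exp (-(a/2)) * Real.exp (3*a/2) := by
      rw [← Real.exp_add]; congr 1; ring
    have hrw : Real.exp a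
        + Real.exp ((-a + d)/2) * ((-1 + -(6*a) / (2*d))/2)
        + Real.exp ((-a - d)/2) * ((-1 - -(6*a) / (2*d))/2)
        = Real.exp (-(a/2)) * (Real.exp (3*a/2) -
          ((Real.exp (d/2) + Real.exp (-(d/2)))/2
            + (3*a/2)/(d/2) * ((Real.exp (d/2) - Real.exp (-(d/2)))/2))) := by
      rw [hE1, hE2, hEa]
      field_simp
      ring
    rw [hrw]
    have := Real.exp_pos (-(a/2))
    nlinarith

lemma Fn_eval (S a b c : ℝ) (hab : a ≥ b) (hbc : b ≥ c)
    (hs : a + b + c = 0) (hS : S = a^2 + b^2 + c^2) :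
    Fn S a = Real.exp a + Real.exp b + Real.exp c ∧
      a ∈ Set.Icc (Real.sqrt (S/6)) (Real.sqrt (2*S/3)) := by
  have hsq : 2*S - 3*a^2 = (b - c)^2 := by nlinarith [hs, hS]
  have hd : Real.sqrt (2*S - 3*a^2) = b - c := by
    rw [hsq, Real.sqrt_sq (by linarith)]
  have ha0 : 0 ≤ a := by linarith
  constructor
  · unfold Fn
    rw [hd]
    have e1 : (-a + (b - c))/2 = b := by linarith
    have e2 : (-a - (b - c))/2 = c := by linarith
    rw [e1, e2]
  · constructor
    · have h1 : S/6 ≤ a^2 := by nlinarith [mul_nonneg (sub_nonneg.2 hab) (by linarith : (0:ℝ) ≤ 2*a + b)]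
      calc Real.sqrt (S/6) ≤ Real.sqrt (a^2) := Real.sqrt_le_sqrt h1
      _ = a := Real.sqrt_sq ha0
    · rw [Real.le_sqrt ha0 (by nlinarith [sq_nonneg (b - c)] : (0:ℝ) ≤ 2*S/3)]
      nlinarith [sq_nonneg (b - c)]

theorem stmt_2 (a b c x y z : ℝ)
    (hab : a ≥ b) (hbc : b ≥ c) (hxy : x ≥ y) (hyz : y ≥ z)
    (hs1 : a + b + c = 0) (hs2 : x + y + z = 0)
    (hsq : a^2 + b^2 + c^2 = x^2 + y^2 + z^2) :
    Real.exp a + Real.exp b + Real.exp c ≤ Real.exp x + Real.exp y + Real.exp z ↔ a ≤ x := by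
  set S := a^2 + b^2 + c^2 with hS
  obtain ⟨hF1, hm1⟩ := Fn_eval S a b c hab hbc hs1 rfl
  obtain ⟨hF2, hm2⟩ := Fn_eval S x y z hxy hyz hs2 hsq
  rw [← hF1, ← hF2]
  exact (Fn_mono S).le_iff_le hm1 hm2
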